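/- arXiv:2102.08808 — 2 statements merged into one kernel-verified Lean document; each statement's English description precedes it below -/
import Mathlib

section
/- Let n ≥ 2 be a natural number and λ > 0 a real number. If r is a natural number with r ≥ log₂ n + log₂ (ln n) + log₂(λ+1), then n·(1 − 1/n)^{2^r} ≤ 1/n^λ. -/
theorem stmt_2 (n : ℕ) (hn : 2 ≤ n) (l : ℝ) (hl : 0 < l) (r : ℕ)
    (hr : Real.logb 2 n + Real.logb 2 (Real.log n) + Real.logb 2 (l + 1) ≤ (r : ℝ)) :
    (n : ℝ) * (1 - 1 / (n : ℝ)) ^ (2 ^ r) ≤ 1 / (n : ℝ) ^ l := by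
  have hn2 : (2:ℝ) ≤ (n:ℝ) := by exact_mod_cast hn
  have hn0 : (0:ℝ) < n := by linarith
  have hln : 0 < Real.log n := Real.log_pos (by linarith)
  have hl1 : (0:ℝ) < l + 1 := by linarith
  have hX : (0:ℝ) < (n:ℝ) * Real.log n * (l+1) := by positivity
  have hsum : Real.logb 2 ((n:ℝ) * Real.log n * (l+1)) ≤ (r:ℝ) := by
    rw [Real.logb_mul (by positivity) (by positivity),
        Real.logb_mul (by positivity) (by positivity)]
    exact hr
  have hXle : (n:ℝ) * Real.log n * (l+1) ≤ 2 ^ r := by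
    have h := (Real.logb_le_iff_le_rpow (by norm_num) hX).mp hsum
    rwa [Real.rpow_natCast] at h
  have hbase : (0:ℝ) ≤ 1 - 1/(n:ℝ) := by
    have : 1/(n:ℝ) ≤ 1 := by
      rw [div_le_one hn0]; linarith
    linarith
  have hpow : (1 - 1/(n:ℝ)) ^ (2^r) ≤ Real.exp (-((2:ℝ)^r / n)) := by
    have h1 : 1 - 1/(n:ℝ) ≤ Real.exp (-(1/n)) := by
      have := Real.add_one_le_exp (-(1/(n:ℝ)))
      linarith
    calc (1 - 1/(n:ℝ)) ^ (2^r) ≤ (Real.exp (-(1/(n:ℝ)))) ^ (2^r) :=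
          pow_le_pow_left₀ hbase h1 _
      _ = Real.exp (-((2:ℝ)^r / n)) := by
          rw [← Real.exp_nat_mul]
          congr 1
          push_cast
          ring
  have hexp : Real.exp (-((2:ℝ)^r / n)) ≤ Real.exp (-((l+1) * Real.log n)) := by
    apply Real.exp_le_exp.mpr
    rw [neg_le_neg_iff, le_div_iff₀ hn0]
    nlinarith [hXle]
  have hrpow : Real.exp (-((l+1) * Real.log n)) = (n:ℝ) ^ (-(l+1)) := by
    rw [Real.rpow_def_of_pos hn0]
    ring_nf
  calc (n:ℝ) * (1 - 1/(n:ℝ)) ^ (2^r) ≤ (n:ℝ) * (n:ℝ) ^ (-(l+1)) := by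
        apply mul_le_mul_of_nonneg_left _ (le_of_lt hn0)
        exact (hpow.trans hexp).trans_eq hrpow
    _ = 1 / (n:ℝ) ^ l := by
        have h : (n:ℝ) * (n:ℝ) ^ (-(l+1)) = (n:ℝ) ^ ((1:ℝ) + -(l+1)) := by
          rw [Real.rpow_add hn0, Real.rpow_one]
        rw [h]
        norm_num
        rw [Real.rpow_neg (le_of_lt hn0)]
end

section
/- Let G be a graph with minimum degree d, maximum degree Δ, average degree α = 2m/n, and edge expansion β. If β + d > α and d + Δ ≤ 2α, then for every S ⊆ V with |S| ≤ n/2: ξ(E(S)) ≥ (1+δ)·|S|/n and ξ(E(S) \ ∂S) ≤ (1−δ)·|S|/n, where δ = (β+d)/α − 1 > 0 and ξ is the uniform distribution on edges. -/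
/-- Edges with at least one endpoint in `S`. -/
def incEdges {V : Type*} [Fintype V] [DecidableEq V] (G : SimpleGraph V) [DecidableRel G.Adj]
    (S : Finset V) : Finset (Sym2 V) :=
  G.edgeFinset.filter (fun e => ∃ u v, e = s(u, v) ∧ (u ∈ S ∨ v ∈ S))

/-- Edges with exactly one endpoint in `S` (the edge boundary of `S`). -/
def bdryEdges {V : Type*} [Fintype V] [DecidableEq V] (G : SimpleGraph V) [DecidableRel G.Adj]
    (S : Finset V) : Finset (Sym2 V) :=
  G.edgeFinset.filter (fun e => ∃ u v, e = s(u, v) ∧ u ∈ S ∧ v ∉ S)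

lemma exists_rep_iff {V : Type*} (a b : V) (P : V → V → Prop) :
    (∃ u v, s(a, b) = s(u, v) ∧ P u v) ↔ P a b ∨ P b a := by
  constructor
  · rintro ⟨u, v, h, hP⟩
    rw [Sym2.eq_iff] at h
    rcases h with ⟨rfl, rfl⟩ | ⟨rfl, rfl⟩
    · exact Or.inl hP
    · exact Or.inr hP
  · rintro (h | h)
    · exact ⟨a, b, rfl, h⟩
    · exact ⟨b, a, Sym2.eq_swap, h⟩

lemma bdry_subset_inc {V : Type*} [Fintype V] [DecidableEq V] (G : SimpleGraph V)
    [DecidableRel G.Adj] (S : Finset V) : bdryEdges G S ⊆ incEdges G S := by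
  intro e he
  simp only [bdryEdges, incEdges, Finset.mem_filter] at *
  obtain ⟨he1, u, v, rfl, hu, hv⟩ := he
  exact ⟨he1, u, v, rfl, Or.inl hu⟩

lemma inEdges_eq {V : Type*} [Fintype V] [DecidableEq V] (G : SimpleGraph V)
    [DecidableRel G.Adj] (S : Finset V) :
    (incEdges G S) \ (bdryEdges G S)
      = G.edgeFinset.filter (fun e => ∃ u v, e = s(u, v) ∧ u ∈ S ∧ v ∈ S) := by
  ext e
  induction e with
  | _ a b =>
    simp only [incEdges, bdryEdges, Finset.mem_sdiff, Finset.mem_filter, exists_rep_iff]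
    tauto

lemma sum_deg_eq {V : Type*} [Fintype V] [DecidableEq V] (G : SimpleGraph V)
    [DecidableRel G.Adj] (S : Finset V) :
    ∑ v ∈ S, G.degree v
      = 2 * ((incEdges G S) \ (bdryEdges G S)).card + (bdryEdges G S).card := by
  have step1 : ∑ v ∈ S, G.degree v
      = ∑ e ∈ G.edgeFinset, ∑ v ∈ S, (if v ∈ e then 1 else 0) := by
    rw [Finset.sum_comm]
    refine Finset.sum_congr rfl fun v _ => ?_
    rw [← SimpleGraph.card_incidenceFinset_eq_degree, SimpleGraph.incidenceFinset_eq_filter,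
      Finset.card_filter]
  rw [step1, inEdges_eq, bdryEdges, Finset.card_filter, Finset.card_filter,
    Finset.mul_sum, ← Finset.sum_add_distrib]
  refine Finset.sum_congr rfl fun e he => ?_
  induction e with
  | _ a b =>
    have hab : a ≠ b := by
      rw [SimpleGraph.mem_edgeFinset, SimpleGraph.mem_edgeSet] at he
      exact he.ne
    simp only [Sym2.mem_iff, exists_rep_iff]
    have hsplit : ∀ v : V, (if v = a ∨ v = b then (1 : ℕ) else 0)
        = (if v = a then 1 else 0) + (if v = b then 1 else 0) := by
      intro v
      by_cases h1 : v = a <;> by_cases h2 : v = b <;> simp_all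
    rw [Finset.sum_congr rfl fun v _ => hsplit v, Finset.sum_add_distrib,
      Finset.sum_ite_eq' S a (fun _ => 1), Finset.sum_ite_eq' S b (fun _ => 1)]
    by_cases ha : a ∈ S <;> by_cases hb : b ∈ S <;> simp [ha, hb]

theorem stmt_13 {V : Type*} [Fintype V] [DecidableEq V] (G : SimpleGraph V) [DecidableRel G.Adj]
    (hn : 0 < Fintype.card V) (hm : 1 ≤ G.edgeFinset.card)
    (d Δ α β δ : ℝ)
    (hd : ∀ v, d ≤ (G.degree v : ℝ)) (hΔ : ∀ v, (G.degree v : ℝ) ≤ Δ)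
    (hα : α = 2 * (G.edgeFinset.card : ℝ) / Fintype.card V)
    (hβ : ∀ S : Finset V, 2 * S.card ≤ Fintype.card V →
      β * S.card ≤ ((bdryEdges G S).card : ℝ))
    (h1 : α < β + d) (h2 : d + Δ ≤ 2 * α)
    (hδ : δ = (β + d) / α - 1) :
    0 < δ ∧
      ∀ S : Finset V, 2 * S.card ≤ Fintype.card V →
        (1 + δ) * S.card / Fintype.card V ≤ ((incEdges G S).card : ℝ) / G.edgeFinset.card ∧
        (((incEdges G S) \ (bdryEdges G S)).card : ℝ) / G.edgeFinset.card ≤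
          (1 - δ) * S.card / Fintype.card V := by
  have hn' : (0 : ℝ) < Fintype.card V := by exact_mod_cast hn
  have hm' : (0 : ℝ) < G.edgeFinset.card := by
    have : (1 : ℝ) ≤ G.edgeFinset.card := by exact_mod_cast hm
    linarith
  have hα' : (0 : ℝ) < α := by
    rw [hα]; positivity
  have hαn : α * Fintype.card V = 2 * G.edgeFinset.card := by
    rw [hα]; field_simp
  have hδpos : 0 < δ := by
    rw [hδ]
    rw [lt_sub_iff_add_lt, zero_add, lt_div_iff₀ hα']
    linarith
  refine ⟨hδpos, fun S hS => ?_⟩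
  set K : ℝ := (((incEdges G S) \ (bdryEdges G S)).card : ℝ) with hK
  set B : ℝ := ((bdryEdges G S).card : ℝ) with hB
  set I : ℝ := ((incEdges G S).card : ℝ) with hI
  set s : ℝ := (S.card : ℝ) with hs
  have hIKB : K + B = I := by
    rw [hK, hB, hI]
    exact_mod_cast Finset.card_sdiff_add_card_eq_card (bdry_subset_inc G S)
  have hsum : (∑ v ∈ S, (G.degree v : ℝ)) = 2 * K + B := by
    rw [hK, hB]
    exact_mod_cast congrArg Nat.cast (sum_deg_eq G S)
  have hlow : d * s ≤ 2 * K + B := by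
    rw [← hsum, hs]
    calc d * S.card = ∑ _v ∈ S, d := by rw [Finset.sum_const, nsmul_eq_mul]; ring
    _ ≤ ∑ v ∈ S, (G.degree v : ℝ) := Finset.sum_le_sum fun v _ => hd v
  have hhigh : 2 * K + B ≤ Δ * s := by
    rw [← hsum, hs]
    calc ∑ v ∈ S, (G.degree v : ℝ) ≤ ∑ _v ∈ S, Δ := Finset.sum_le_sum fun v _ => hΔ v
    _ = Δ * S.card := by rw [Finset.sum_const, nsmul_eq_mul]; ring
  have hBlow : β * s ≤ B := hβ S hS
  have hs0 : 0 ≤ s := by rw [hs]; positivity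
  have h1δ : 1 + δ = (β + d) / α := by rw [hδ]; ring
  constructor
  · rw [div_le_div_iff₀ hn' hm', h1δ, div_mul_eq_mul_div, div_mul_eq_mul_div,
      div_le_iff₀ hα']
    have key1 : (β + d) * s ≤ 2 * I := by linarith
    have e1 : I * (α * (Fintype.card V : ℝ)) = I * (2 * (G.edgeFinset.card : ℝ)) := by
      rw [hαn]
    linarith [mul_le_mul_of_nonneg_right key1 hm'.le, e1]
  · rw [div_le_div_iff₀ hm' hn']
    have h1mδ : 1 - δ = (2 * α - (β + d)) / α := by
      rw [hδ]; field_simp; ring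
    rw [h1mδ]
    rw [div_mul_eq_mul_div, div_mul_eq_mul_div, le_div_iff₀ hα']
    have hΔs : Δ * s ≤ (2 * α - d) * s := mul_le_mul_of_nonneg_right (by linarith) hs0
    have key2 : 2 * K ≤ (2 * α - (β + d)) * s := by nlinarith
    have e2 : K * (α * (Fintype.card V : ℝ)) = K * (2 * (G.edgeFinset.card : ℝ)) := by
      rw [hαn]
    nlinarith [mul_le_mul_of_nonneg_right key2 hm'.le, e2]
end
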